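/- Let (⋯ →f₁→ X₁ →f₀→ X₀) be an inverse sequence of complete metric spaces and uniformly continuous maps, and let L ⊆ ∏ᵢ Xᵢ be its inverse limit. If fᵢ(Xᵢ₊₁) is dense in Xᵢ for every i, then the image of the projection L → X₀ is dense in X₀. -/

import Mathlib

/-- Bourbaki's Mittag-Leffler theorem: if `(⋯ → X₁ → X₀)` is an inverse sequence of
complete metric spaces and uniformly continuous maps each of which has dense image,
then the projection of the inverse limit `L` to `X₀` has dense image. -/
theorem dense_image_of_invLim_of_denseRange
    {X : ℕ → Type} [∀ i, MetricSpace (X i)] [∀ i, CompleteSpace (X i)]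
    (f : ∀ i, X (i + 1) → X i)
    (huc : ∀ i, UniformContinuous (f i))
    (hd : ∀ i, Dense (Set.range (f i))) :
    Dense (Set.range
      (fun g : {g : ∀ i, X i // ∀ i, f i (g (i + 1)) = g i} => g.1 0)) := by
  classical
  by_cases hne : Nonempty (X 0)
  swap
  · rw [not_nonempty_iff] at hne
    intro x
    exact (hne.false x).elim
  -- all spaces are nonempty
  have hne' : ∀ i, Nonempty (X i) := by
    intro i
    induction i with
    | zero => exact hne
    | succ i ih =>
      by_contra h
      rw [not_nonempty_iff] at h
      haveI := ih
      obtain ⟨-, a, -⟩ := (hd i).nonempty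
      exact h.false a
  let d : ∀ i, X i := fun i => (hne' i).some
  -- the shift map on the product
  set T : (∀ j, X j) → (∀ j, X j) := fun g j => f j (g (j + 1)) with hT
  -- uniform continuity of iterated composites, coordinatewise
  have UC : ∀ (n i : ℕ) (e : ℝ), 0 < e → ∃ δ, 0 < δ ∧ ∀ g g' : ∀ j, X j,
      dist (g (i + n)) (g' (i + n)) < δ → dist (T^[n] g i) (T^[n] g' i) < e := by
    intro n
    induction n with
    | zero =>
      intro i e he
      exact ⟨e, he, fun g g' h => by simpa using h⟩
    | succ n ih =>
      intro i e he
      obtain ⟨δ', hδ'pos, hδ'⟩ := ih i e he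
      obtain ⟨δ, hδpos, hδ⟩ := Metric.uniformContinuous_iff.mp (huc (i + n)) δ' hδ'pos
      refine ⟨δ, hδpos, fun g g' h => ?_⟩
      rw [Function.iterate_succ_apply, Function.iterate_succ_apply]
      exact hδ' (T g) (T g') (hδ h)
  rw [Metric.dense_iff]
  intro x ε hε
  -- choose moduli
  choose δfun hδpos hδspec using
    fun (n i : ℕ) => UC n i (ε / 2 ^ (i + n + 2)) (by positivity)
  set η : ℕ → ℝ := fun m => (Finset.range (m + 1)).inf' ⟨0, Finset.mem_range.mpr (Nat.succ_pos m)⟩ (fun i => δfun (m - i) i)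
    with hη
  have hηpos : ∀ m, 0 < η m := by
    intro m
    rw [hη]; beta_reduce; apply (Finset.lt_inf'_iff ..).mpr
    intro i _
    exact hδpos _ _
  have hηle : ∀ i n, η (i + n) ≤ δfun n i := by
    intro i n
    have hmem : i ∈ Finset.range (i + n + 1) := by simp
    have h2 := Finset.inf'_le (f := fun j => δfun (i + n - j) j) hmem
    simp only [Nat.add_sub_cancel_left] at h2
    exact h2
  -- construct the approximating sequence
  have step : ∀ m (ym : X m), ∃ a : X (m + 1), dist (f m a) ym < η m := by
    intro m ym
    obtain ⟨b, hb, hbd⟩ := Metric.mem_closure_iff.mp ((hd m) ym) (η m) (hηpos m)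
    obtain ⟨a, rfl⟩ := hb
    exact ⟨a, by rwa [dist_comm]⟩
  let y : ∀ n, X n := fun n => Nat.rec x (fun m ym => (step m ym).choose) n
  have hy0 : y 0 = x := rfl
  have hys : ∀ m, dist (f m (y (m + 1))) (y m) < η m := fun m => (step m (y m)).choose_spec
  -- extend y m to an element of the product
  let u : ℕ → ∀ j, X j := fun m j => if h : j = m then cast (congrArg X h.symm) (y m) else d j
  have hu : ∀ m, u m m = y m := by intro m; simp [u]
  -- the Cauchy sequences
  let z : ∀ i, ℕ → X i := fun i n => T^[n] (u (i + n)) i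
  have hz : ∀ i n, dist (z i n) (z i (n + 1)) < ε / 2 ^ (i + n + 2) := by
    intro i n
    have h1 : dist (u (i + n) (i + n)) (T (u (i + n + 1)) (i + n)) < δfun n i := by
      have : T (u (i + n + 1)) (i + n) = f (i + n) (y (i + n + 1)) := by
        rw [hT]; simp only []; rw [hu]
      rw [hu, this, dist_comm]
      exact lt_of_lt_of_le (hys (i + n)) (hηle i n)
    have h2 := hδspec n i (u (i + n)) (T (u (i + n + 1))) h1
    have h3 : z i (n + 1) = T^[n] (T (u (i + n + 1))) i := by
      show T^[n + 1] (u (i + (n + 1))) i = _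
      rw [Function.iterate_succ_apply]
      rfl
    rw [h3]
    exact h2
  have hzle : ∀ i n, dist (z i n) (z i (n + 1)) ≤ (ε / 2 ^ (i + 1)) / 2 / 2 ^ n := by
    intro i n
    refine le_of_lt (lt_of_lt_of_le (hz i n) (le_of_eq ?_))
    rw [div_div, div_div]
    congr 1
    rw [show i + n + 2 = (i + 1) + (n + 1) from by omega, pow_add]
    ring
  have hcauchy : ∀ i, CauchySeq (z i) := fun i => cauchySeq_of_le_geometric_two (hzle i)
  have hlim : ∀ i, ∃ a : X i, Filter.Tendsto (z i) Filter.atTop (nhds a) := fun i =>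
    cauchySeq_tendsto_of_complete (hcauchy i)
  choose g hg using hlim
  -- compatibility
  have hcompat : ∀ i, f i (g (i + 1)) = g i := by
    intro i
    have h1 : Filter.Tendsto (fun n => f i (z (i + 1) n)) Filter.atTop (nhds (f i (g (i + 1)))) :=
      ((huc i).continuous.tendsto _).comp (hg (i + 1))
    have h2 : ∀ n, f i (z (i + 1) n) = z i (n + 1) := by
      intro n
      show f i (T^[n] (u (i + 1 + n)) (i + 1)) = T^[n + 1] (u (i + (n + 1))) i
      have hnat : i + 1 + n = i + (n + 1) := by omega
      rw [hnat, Function.iterate_succ_apply']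
    have h3 : Filter.Tendsto (fun n => z i (n + 1)) Filter.atTop (nhds (g i)) :=
      (hg i).comp (Filter.tendsto_add_atTop_nat 1)
    rw [funext h2] at h1
    exact tendsto_nhds_unique h1 h3
  -- conclude
  refine ⟨g 0, ?_, ⟨⟨g, hcompat⟩, rfl⟩⟩
  rw [Metric.mem_ball]
  have hz00 : z 0 0 = x := by
    show u 0 0 = x
    rw [hu]
    exact hy0
  have := dist_le_of_le_geometric_two_of_tendsto₀ (hzle 0) (hg 0)
  rw [hz00] at this
  rw [dist_comm]
  calc dist x (g 0) ≤ ε / 2 ^ (0 + 1) := this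
    _ < ε := by rw [zero_add, pow_one]; linarith
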